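/- Let K be an A-field and let Υ, Υ̂ be triangular t-modules of the same dimension n over K, with diagonal Drinfeld modules ψ_1,…,ψ_n and ψ̂_1,…,ψ̂_n. Let U ∈ Mat_n(K{τ}) be a triangular morphism Υ → Υ̂, i.e. U is lower triangular and U·Υ_t = Υ̂_t·U. Then: (i) each diagonal entry u_k := U_{k,k} satisfies u_k·ψ_{n+1−k,t} = ψ̂_{n+1−k,t}·u_k (it is a morphism of Drinfeld modules); and (ii) if K has A-characteristic zero and all constant terms of the entries of U vanish (∂U = 0), then U = 0. In particular, in A-characteristic zero the 𝔽_q-linear map U ↦ ∂U from the space of triangular morphisms Υ → Υ̂ to Mat_n(K) is injective. -/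

import Mathlib

open Polynomial Matrix Finset

noncomputable section

/-- Twisted ("skew") multiplication of polynomials in `τ`, determined by the rule
`τ · c = c^q · τ`:  `(Σᵢ aᵢτ^i) · (Σⱼ bⱼτ^j) = Σ_{i,j} aᵢ bⱼ^(q^i) τ^(i+j)`. -/
def twMul {K : Type*} [Field K] (q : ℕ) (f g : Polynomial K) : Polynomial K :=
  f.sum fun i a => g.sum fun j b => Polynomial.C (a * b ^ q ^ i) * Polynomial.X ^ (i + j)

/-- Twisted multiplication of matrices over the twisted polynomial ring `K{τ}`. -/
def twMatMul {K : Type*} [Field K] (q : ℕ) {α β γ : Type*} [Fintype β]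
    (A : Matrix α β (Polynomial K)) (B : Matrix β γ (Polynomial K)) :
    Matrix α γ (Polynomial K) :=
  Matrix.of fun i k => ∑ j, twMul q (A i j) (B j k)

/-- `ψ` is (the value at `t` of) a Drinfeld module of rank `r` over the `A`-field `(K, θ)`. -/
def IsDrinfeld {K : Type*} [Field K] (θ : K) (r : ℕ) (ψ : Polynomial K) : Prop :=
  1 ≤ r ∧ ψ.coeff 0 = θ ∧ ψ.natDegree = r ∧ ψ.coeff r ≠ 0

/-- `Υ` is (the value at `t` of) a triangular t-module of dimension `n` with diagonal
Drinfeld modules `ψ 0 = ψ₁, …, ψ (n-1) = ψₙ` of ranks `r 0, …, r (n-1)`:  `Υ` is lower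
triangular and its `(k,k)` diagonal entry is `ψ k.rev` (so `ψₙ` is top-left and
`ψ₁` is bottom-right). -/
def IsTriangular {K : Type*} [Field K] (θ : K) {n : ℕ}
    (Υ : Matrix (Fin n) (Fin n) (Polynomial K))
    (ψ : Fin n → Polynomial K) (r : Fin n → ℕ) : Prop :=
  (∀ i j : Fin n, i < j → Υ i j = 0) ∧
  (∀ k : Fin n, Υ k k = ψ k.rev) ∧
  (∀ i : Fin n, IsDrinfeld θ (r i) (ψ i))


lemma twMul_coeff {K : Type*} [Field K] {q : ℕ} (hq : 1 ≤ q) (f g : Polynomial K) (m : ℕ) :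
    (twMul q f g).coeff m =
      ∑ ij ∈ Finset.HasAntidiagonal.antidiagonal m, f.coeff ij.1 * g.coeff ij.2 ^ q ^ ij.1 := by
  classical
  have h0 : ∀ i : ℕ, q ^ i ≠ 0 := fun i => pow_ne_zero i (by omega)
  rw [twMul, Polynomial.sum_def]
  simp only [Polynomial.sum_def, Polynomial.finset_sum_coeff, Polynomial.coeff_C_mul,
    Polynomial.coeff_X_pow, mul_ite, mul_one, mul_zero]
  rw [← Finset.sum_product']
  rw [← Finset.sum_filter]
  apply Finset.sum_subset
  · intro x hx
    simp only [Finset.mem_filter] at hx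
    simp [Finset.mem_antidiagonal, hx.2.symm]
  · intro x hx hnx
    simp only [Finset.HasAntidiagonal.mem_antidiagonal] at hx
    simp only [Finset.mem_filter, Finset.mem_product, Polynomial.mem_support_iff, not_and,
      not_not] at hnx
    by_cases h1 : f.coeff x.1 = 0
    · simp [h1]
    · by_cases h2 : g.coeff x.2 = 0
      · simp [h2, zero_pow (h0 x.1)]
      · exact absurd (hnx ⟨fun h => absurd h h1, fun h => absurd h h2⟩) (by omega)

lemma twMul_zero_left {K : Type*} [Field K] (q : ℕ) (g : Polynomial K) : twMul q 0 g = 0 := by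
  simp [twMul]

lemma twMul_zero_right {K : Type*} [Field K] (q : ℕ) (f : Polynomial K) : twMul q f 0 = 0 := by
  simp [twMul, Polynomial.sum_def]

lemma twMul_sub_left {K : Type*} [Field K] {q : ℕ} (hq : 1 ≤ q) (f f' g : Polynomial K) :
    twMul q (f - f') g = twMul q f g - twMul q f' g := by
  ext m
  simp [twMul_coeff hq, Polynomial.coeff_sub, sub_mul, Finset.sum_sub_distrib]

lemma twMul_sub_right {K : Type*} [Field K] (p : ℕ) [Fact p.Prime] [CharP K p]
    {q s : ℕ} (hs : 0 < s) (hq : q = p ^ s) (f g g' : Polynomial K) :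
    twMul q f (g - g') = twMul q f g - twMul q f g' := by
  have hq1 : 1 ≤ q := by subst hq; exact Nat.one_le_pow _ _ (Fact.out (p := p.Prime)).pos
  ext m
  simp only [twMul_coeff hq1, Polynomial.coeff_sub, ← Finset.sum_sub_distrib, ← mul_sub]
  refine Finset.sum_congr rfl fun ij _ => ?_
  congr 1
  rw [hq, ← pow_mul, sub_pow_char_pow]

lemma key_cancel {K : Type*} [Field K] (p s q : ℕ) [Fact p.Prime] (hs : 0 < s) (hq : q = p ^ s)
    [Algebra (GaloisField p s) K] {θ : K} (htr : Transcendental (GaloisField p s) θ)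
    {u ψ ψ' : Polynomial K} (hψ : ψ.coeff 0 = θ) (hψ' : ψ'.coeff 0 = θ)
    (h : twMul q u ψ = twMul q ψ' u) (h0 : u.coeff 0 = 0) : u = 0 := by
  have hq2 : 2 ≤ q := by
    subst hq
    calc 2 ≤ p := (Fact.out (p := p.Prime)).two_le
    _ ≤ p ^ s := Nat.le_self_pow hs.ne' p
  have hq1 : 1 ≤ q := by omega
  by_contra hu
  set m := u.natTrailingDegree with hm
  have hcm : u.coeff m ≠ 0 := Polynomial.coeff_natTrailingDegree_ne_zero.mpr hu
  have hm1 : 1 ≤ m := by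
    rcases Nat.eq_zero_or_pos m with h | h
    · rw [h] at hcm; exact absurd h0 hcm
    · exact h
  have hlow : ∀ i < m, u.coeff i = 0 := fun i hi =>
    Polynomial.coeff_eq_zero_of_lt_natTrailingDegree hi
  have hcoeff := congrArg (fun f => Polynomial.coeff f m) h
  simp only [twMul_coeff hq1] at hcoeff
  have hL : ∑ ij ∈ Finset.HasAntidiagonal.antidiagonal m, u.coeff ij.1 * ψ.coeff ij.2 ^ q ^ ij.1
      = u.coeff m * θ ^ q ^ m := by
    rw [Finset.sum_eq_single_of_mem (m, 0) (by simp)]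
    · simp [hψ]
    · intro ij hij hne
      simp only [Finset.HasAntidiagonal.mem_antidiagonal] at hij
      have : ij.1 < m := by
        rcases Nat.lt_or_ge ij.1 m with h | h
        · exact h
        · exfalso; apply hne
          have : ij.1 = m := by omega
          have : ij.2 = 0 := by omega
          exact Prod.ext (by omega) this
      rw [hlow _ this, zero_mul]
  have hR : ∑ ij ∈ Finset.HasAntidiagonal.antidiagonal m, ψ'.coeff ij.1 * u.coeff ij.2 ^ q ^ ij.1
      = θ * u.coeff m := by
    rw [Finset.sum_eq_single_of_mem (0, m) (by simp)]
    · simp [hψ']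
    · intro ij hij hne
      simp only [Finset.HasAntidiagonal.mem_antidiagonal] at hij
      have hj : ij.2 < m := by
        rcases Nat.lt_or_ge ij.2 m with h | h
        · exact h
        · exfalso; apply hne; exact Prod.ext (by omega) (by omega)
      rw [hlow _ hj, zero_pow (pow_ne_zero _ (by omega)), mul_zero]
  rw [hL, hR] at hcoeff
  have hθ : θ ^ q ^ m = θ := by
    have := hcoeff
    rw [mul_comm] at this
    exact mul_right_cancel₀ hcm this
  apply htr
  refine ⟨Polynomial.X ^ q ^ m - Polynomial.X, ?_, ?_⟩
  · intro hzero
    have h2 : 2 ≤ q ^ m := le_trans hq2 (Nat.le_self_pow (by omega) q)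
    have := congrArg (fun f => Polynomial.coeff f (q ^ m)) hzero
    simp only [Polynomial.coeff_sub, Polynomial.coeff_X_pow, Polynomial.coeff_X,
      Polynomial.coeff_zero, if_pos rfl] at this
    rw [if_neg (by omega : ¬ (1 : ℕ) = q ^ m)] at this
    norm_num at this
  · simp [hθ]

lemma tri_zero {K : Type*} [Field K] (p s q : ℕ) [Fact p.Prime] (hs : 0 < s) (hq : q = p ^ s)
    [Algebra (GaloisField p s) K] {θ : K} (htr : Transcendental (GaloisField p s) θ) {n : ℕ}
    {Υ : Matrix (Fin n) (Fin n) (Polynomial K)} {ψ : Fin n → Polynomial K} {r : Fin n → ℕ}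
    (hΥ : IsTriangular θ Υ ψ r)
    {Υ' : Matrix (Fin n) (Fin n) (Polynomial K)} {ψ' : Fin n → Polynomial K} {r' : Fin n → ℕ}
    (hΥ' : IsTriangular θ Υ' ψ' r')
    (U : Matrix (Fin n) (Fin n) (Polynomial K))
    (hUtri : ∀ a b : Fin n, a < b → U a b = 0)
    (hcomm : twMatMul q U Υ = twMatMul q Υ' U)
    (hdz : ∀ a b : Fin n, (U a b).coeff 0 = 0) : U = 0 := by
  have main : ∀ d : ℕ, ∀ a b : Fin n, (a : ℕ) - (b : ℕ) ≤ d → U a b = 0 := by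
    intro d
    induction d with
    | zero =>
      intro a b hab
      rcases lt_trichotomy a b with h | h | h
      · exact hUtri a b h
      · subst h
        have heq : ∑ j, twMul q (U a j) (Υ j a) = ∑ j, twMul q (Υ' a j) (U j a) := by
          simpa [twMatMul] using congrFun (congrFun hcomm a) a
        rw [Finset.sum_eq_single a (fun j _ hj => by
            rcases lt_or_gt_of_ne hj with h' | h'
            · rw [hΥ.1 j a h', twMul_zero_right]
            · rw [hUtri a j h', twMul_zero_left]) (by simp)] at heq
        rw [Finset.sum_eq_single a (fun j _ hj => by
            rcases lt_or_gt_of_ne hj with h' | h'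
            · rw [hUtri j a h', twMul_zero_right]
            · rw [hΥ'.1 a j h', twMul_zero_left]) (by simp)] at heq
        rw [hΥ.2.1 a, hΥ'.2.1 a] at heq
        exact key_cancel p s q hs hq htr ((hΥ.2.2 a.rev).2.1) ((hΥ'.2.2 a.rev).2.1) heq (hdz a a)
      · exfalso
        have : (b : ℕ) < a := h
        omega
    | succ d ih =>
      intro a b hab
      rcases le_or_gt ((a : ℕ) - b) d with h | h
      · exact ih a b h
      · have hba : (b : ℕ) < a := by omega
        have heq : ∑ j, twMul q (U a j) (Υ j b) = ∑ j, twMul q (Υ' a j) (U j b) := by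
          simpa [twMatMul] using congrFun (congrFun hcomm a) b
        rw [Finset.sum_eq_single b (fun j _ hj => by
            rcases lt_or_gt_of_ne hj with h' | h'
            · rw [hΥ.1 j b h', twMul_zero_right]
            · have : (b : ℕ) < j := h'
              rw [ih a j (by omega), twMul_zero_left]) (by simp)] at heq
        rw [Finset.sum_eq_single a (fun j _ hj => by
            rcases lt_or_gt_of_ne hj with h' | h'
            · have : (j : ℕ) < a := h'
              rw [ih j b (by omega), twMul_zero_right]
            · rw [hΥ'.1 a j h', twMul_zero_left]) (by simp)] at heq
        rw [hΥ.2.1 b, hΥ'.2.1 a] at heq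
        exact key_cancel p s q hs hq htr ((hΥ.2.2 b.rev).2.1) ((hΥ'.2.2 a.rev).2.1) heq (hdz a b)
  ext a b
  rw [main ((a : ℕ) - b) a b le_rfl, Matrix.zero_apply]

/-- basic properties of triangular morphisms.
For lower triangular morphisms `U : Υ → Υ̂` of triangular t-modules:
(i) every diagonal entry `u_k = U k k` is a morphism of Drinfeld modules
`ψ_{k.rev} → ψ̂_{k.rev}`;
(ii) if `K` has `A`-characteristic zero (`θ` transcendental over `𝔽_q`) and all constant
terms of the entries of `U` vanish, then `U = 0`; in particular (iii) in
`A`-characteristic zero the map `U ↦ ∂U` on triangular morphisms is injective. -/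
theorem triangular_morphism_basic
    {K : Type*} [Field K] (p s q : ℕ) [Fact p.Prime] (hs : 0 < s) (hq : q = p ^ s)
    [Algebra (GaloisField p s) K] (θ : K) {n : ℕ}
    (Υ : Matrix (Fin n) (Fin n) (Polynomial K))
    (ψ : Fin n → Polynomial K) (r : Fin n → ℕ)
    (hΥ : IsTriangular θ Υ ψ r)
    (Υ' : Matrix (Fin n) (Fin n) (Polynomial K))
    (ψ' : Fin n → Polynomial K) (r' : Fin n → ℕ)
    (hΥ' : IsTriangular θ Υ' ψ' r') :
    (∀ U : Matrix (Fin n) (Fin n) (Polynomial K),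
      (∀ a b : Fin n, a < b → U a b = 0) →
      twMatMul q U Υ = twMatMul q Υ' U →
      ∀ k : Fin n, twMul q (U k k) (ψ k.rev) = twMul q (ψ' k.rev) (U k k)) ∧
    (Transcendental (GaloisField p s) θ →
      (∀ U : Matrix (Fin n) (Fin n) (Polynomial K),
        (∀ a b : Fin n, a < b → U a b = 0) →
        twMatMul q U Υ = twMatMul q Υ' U →
        (∀ a b : Fin n, (U a b).coeff 0 = 0) → U = 0) ∧
      (∀ U U' : Matrix (Fin n) (Fin n) (Polynomial K),
        (∀ a b : Fin n, a < b → U a b = 0) →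
        twMatMul q U Υ = twMatMul q Υ' U →
        (∀ a b : Fin n, a < b → U' a b = 0) →
        twMatMul q U' Υ = twMatMul q Υ' U' →
        (∀ a b : Fin n, (U a b).coeff 0 = (U' a b).coeff 0) → U = U')) := by
  have hq1 : 1 ≤ q := by
    subst hq; exact Nat.one_le_pow _ _ (Fact.out (p := p.Prime)).pos
  haveI : CharP K p :=
    charP_of_injective_algebraMap (algebraMap (GaloisField p s) K).injective p
  refine ⟨?_, fun htr => ⟨fun U hUtri hcomm hdz => tri_zero p s q hs hq htr hΥ hΥ' U hUtri hcomm hdz, ?_⟩⟩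
  · intro U hUtri hcomm k
    have heq : ∑ j, twMul q (U k j) (Υ j k) = ∑ j, twMul q (Υ' k j) (U j k) := by
      simpa [twMatMul] using congrFun (congrFun hcomm k) k
    rw [Finset.sum_eq_single k (fun j _ hj => by
        rcases lt_or_gt_of_ne hj with h' | h'
        · rw [hΥ.1 j k h', twMul_zero_right]
        · rw [hUtri k j h', twMul_zero_left]) (by simp)] at heq
    rw [Finset.sum_eq_single k (fun j _ hj => by
        rcases lt_or_gt_of_ne hj with h' | h'
        · rw [hUtri j k h', twMul_zero_right]
        · rw [hΥ'.1 k j h', twMul_zero_left]) (by simp)] at heq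
    rw [hΥ.2.1 k, hΥ'.2.1 k] at heq
    exact heq
  · intro U U' hUtri hUcomm hU'tri hU'comm hdz
    have hVtri : ∀ a b : Fin n, a < b → (U - U') a b = 0 := fun a b hab => by
      simp [Matrix.sub_apply, hUtri a b hab, hU'tri a b hab]
    have hVcomm : twMatMul q (U - U') Υ = twMatMul q Υ' (U - U') := by
      ext i k
      have e1 : ∑ j, twMul q (U i j) (Υ j k) = ∑ j, twMul q (Υ' i j) (U j k) := by
        simpa [twMatMul] using congrFun (congrFun hUcomm i) k
      have e2 : ∑ j, twMul q (U' i j) (Υ j k) = ∑ j, twMul q (Υ' i j) (U' j k) := by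
        simpa [twMatMul] using congrFun (congrFun hU'comm i) k
      simp only [twMatMul, Matrix.of_apply, Matrix.sub_apply, twMul_sub_left hq1,
        twMul_sub_right p hs hq, Finset.sum_sub_distrib, e1, e2]
    have hVdz : ∀ a b : Fin n, ((U - U') a b).coeff 0 = 0 := fun a b => by
      simp [Matrix.sub_apply, Polynomial.coeff_sub, hdz a b]
    have := tri_zero p s q hs hq htr hΥ hΥ' (U - U') hVtri hVcomm hVdz
    exact sub_eq_zero.mp this
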